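/- Let α and β be the two roots in ℂ of the polynomial x² − (1+i)x + 1, and let D ∈ M₂(ℂ) be the diagonal matrix with diagonal entries α and conj β. If A ∈ M₂(ℂ) is Hermitian positive semidefinite and satisfies D · A · Dᴴ = A (where Dᴴ is the conjugate transpose of D), then A = 0. (Geometrically: there is no nonzero nonnegative translation-invariant (1,1)-form on the torus X = ℂ²/Γ invariant under the automorphism f = diag(α, conj β); this is the key step showing the Kähler rank of the torus-suspension M over an elliptic curve with fibre X and monodromy f equals 1.) -/

import Mathlib

open Complex Matrix
open scoped ComplexOrder

/-- Let `α`, `β` be the two roots of `x² − (1+i)x + 1` and `D = diag(α, conj β)`.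
If `A ∈ M₂(ℂ)` is Hermitian positive semidefinite and `D · A · Dᴴ = A`, then `A = 0`. -/
theorem no_invariant_psd_form (α β : ℂ)
    (hα : α ^ 2 - (1 + I) * α + 1 = 0)
    (hsum : α + β = 1 + I) (hprod : α * β = 1)
    (A : Matrix (Fin 2) (Fin 2) ℂ)
    (hA : A.PosSemidef)
    (hinv : Matrix.diagonal ![α, (starRingEnd ℂ) β] * A *
        (Matrix.diagonal ![α, (starRingEnd ℂ) β])ᴴ = A) :
    A = 0 := by
  have hαne : α ≠ 0 := by
    intro h; rw [h, zero_mul] at hprod; exact zero_ne_one hprod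
  have hβne : β ≠ 0 := by
    intro h; rw [h, mul_zero] at hprod; exact zero_ne_one hprod
  have him : (α + β).im = 1 := by rw [hsum]; simp
  -- |α|² ≠ 1
  have hne1 : α * (starRingEnd ℂ) α ≠ 1 := by
    intro h
    have hβ : β = (starRingEnd ℂ) α := by
      have : α * β = α * (starRingEnd ℂ) α := by rw [hprod, h]
      exact mul_left_cancel₀ hαne this
    rw [hβ] at him
    simp [Complex.add_im] at him
  have hne2 : (starRingEnd ℂ) β * β ≠ 1 := by
    intro h
    have hαc : α = (starRingEnd ℂ) β := by
      have : (starRingEnd ℂ) β * β = α * β := by rw [h, hprod]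
      exact mul_right_cancel₀ hβne this.symm
    rw [hαc] at him
    simp [Complex.add_im] at him
  -- extract entries
  have h00 := congrFun (congrFun hinv 0) 0
  have h11 := congrFun (congrFun hinv 1) 1
  simp [Matrix.mul_apply, Matrix.diagonal, Matrix.conjTranspose_apply, Fin.sum_univ_two] at h00 h11
  have hA00 : A 0 0 = 0 := by
    by_contra h
    exact hne1 (mul_right_cancel₀ h (by linear_combination h00))
  have hA11 : A 1 1 = 0 := by
    by_contra h
    exact hne2 (mul_right_cancel₀ h (by linear_combination h11))
  have hherm := hA.1
  have hA10 : A 1 0 = (starRingEnd ℂ) (A 0 1) := by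
    have := congrFun (congrFun hherm.symm 1) 0
    simpa [Matrix.conjTranspose_apply] using this
  have hq := hA.dotProduct_mulVec_nonneg ![-(A 0 1), 1]
  simp [dotProduct, Matrix.mulVec, Fin.sum_univ_two, hA00, hA11, hA10] at hq
  have hz : (0:ℂ) ≤ (starRingEnd ℂ) (A 0 1) * A 0 1 := by
    simpa using star_mul_self_nonneg (A 0 1)
  have hzz : (starRingEnd ℂ) (A 0 1) * A 0 1 = 0 :=
    le_antisymm (neg_nonneg.mp (hz.trans hq)) hz
  have hA01 : A 0 1 = 0 := by
    rcases mul_eq_zero.mp hzz with h | h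
    · simpa using congrArg (starRingEnd ℂ) h
    · exact h
  ext i j
  fin_cases i <;> fin_cases j <;>
    simp [hA00, hA01, hA11, hA10, hA01]
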